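/- arXiv:2507.19169 — 3 statements merged into one kernel-verified Lean document; each statement's English description precedes it below -/
import Mathlib

section
/- Let g : [0,∞) → [0,∞) be increasing with g(x) ≤ x for all x ≥ 0 and lim_n n^{-2} ∫_1^n g(x) dx = 0. Let (𝓖_n) be a filtration with 𝓖_0 = {∅,Ω} and 𝓖_n ⊂ 𝓕_n, assume E[f(X_k) | 𝓖_n] = E[f(X_{n+1}) | 𝓖_n] a.s. for all k > n ≥ 0 and all bounded Borel f, and assume 𝓕_{n−⌊g(n)⌋} ⊂ 𝓖_n for each n ≥ 0. Then for each bounded Borel function f : S → ℝ, the sequence (1/n) Σ_{i=1}^n f(X_i) converges in probability as n → ∞. -/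
open MeasureTheory ProbabilityTheory Filter Topology
open scoped ENNReal NNReal

variable {Ω S : Type*}

/-- `Filt X n` is the σ-field `𝓕_n = σ(X_1,…,X_n)` generated by the first `n` variables.
Indexing convention: `X i` here denotes the paper's `X_{i+1}`, so that `Filt X 0 = ⊥`. -/
def Filt [MeasurableSpace S] (X : ℕ → Ω → S) (n : ℕ) : MeasurableSpace Ω :=
  ⨆ i ∈ Finset.range n, MeasurableSpace.comap (X i) inferInstance

/-- The predictive mean `α_n(f) = E[f(X_{n+1}) ∣ 𝓕_n]` (here the paper's `X_{n+1}` is `X n`). -/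
noncomputable def predMean [MeasurableSpace Ω] [MeasurableSpace S]
    (P : Measure Ω) (X : ℕ → Ω → S) (f : S → ℝ) (n : ℕ) : Ω → ℝ :=
  P[(fun ω => f (X n ω)) | Filt X n]

lemma tendstoInMeasure_add' {Ω : Type*} [MeasurableSpace Ω] {P : Measure Ω}
    {f g : ℕ → Ω → ℝ} {F G : Ω → ℝ}
    (hf : TendstoInMeasure P f atTop F) (hg : TendstoInMeasure P g atTop G) :
    TendstoInMeasure P (fun n ω => f n ω + g n ω) atTop (fun ω => F ω + G ω) := by
  rw [tendstoInMeasure_iff_dist] at hf hg ⊢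
  intro ε hε
  have hε2 : 0 < ε / 2 := by linarith
  have h1 := hf (ε / 2) hε2
  have h2 := hg (ε / 2) hε2
  have hle : ∀ n, P {ω | ε ≤ dist (f n ω + g n ω) (F ω + G ω)} ≤
      P {ω | ε / 2 ≤ dist (f n ω) (F ω)} + P {ω | ε / 2 ≤ dist (g n ω) (G ω)} := by
    intro n
    refine (measure_mono ?_).trans (measure_union_le _ _)
    intro ω hω
    simp only [Set.mem_setOf_eq, Set.mem_union] at hω ⊢
    by_contra hcon
    push_neg at hcon
    have hd : dist (f n ω + g n ω) (F ω + G ω) ≤ dist (f n ω) (F ω) + dist (g n ω) (G ω) :=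
      dist_add_add_le _ _ _ _
    have := hcon.1
    have := hcon.2
    linarith
  have hsum : Tendsto (fun n => P {ω | ε / 2 ≤ dist (f n ω) (F ω)} +
      P {ω | ε / 2 ≤ dist (g n ω) (G ω)}) atTop (𝓝 0) := by
    simpa using h1.add h2
  exact tendsto_of_tendsto_of_tendsto_of_le_of_le tendsto_const_nhds hsum
    (fun n => zero_le) hle

/-- Theorem `vc67m91q`: with `g` increasing, `0 ≤ g(x) ≤ x`,
`n⁻² ∫_1ⁿ g(x) dx → 0`, a filtration `(𝓖_n)` with `𝓖_0` trivial, `𝓖_n ⊆ 𝓕_n`,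
`E[f(X_k) ∣ 𝓖_n] = E[f(X_{n+1}) ∣ 𝓖_n]` a.s. for `k > n`, and `𝓕_{n−⌊g(n)⌋} ⊆ 𝓖_n`, the
empirical means `(1/n) ∑_{i=1}^n f(X_i)` converge in probability for each bounded Borel `f`. -/
theorem stmt16 [MeasurableSpace Ω]
    [TopologicalSpace S] [PolishSpace S] [MeasurableSpace S] [BorelSpace S]
    (P : Measure Ω) [IsProbabilityMeasure P]
    (X : ℕ → Ω → S) (hX : ∀ i, Measurable (X i))
    (g : ℝ → ℝ) (hg_mono : MonotoneOn g (Set.Ici 0))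
    (hg_nonneg : ∀ x : ℝ, 0 ≤ x → 0 ≤ g x) (hg_le : ∀ x : ℝ, 0 ≤ x → g x ≤ x)
    (hg_int : Tendsto (fun n : ℕ => (∫ x in (1 : ℝ)..(n : ℝ), g x) / (n : ℝ) ^ 2)
      atTop (𝓝 0))
    (G : ℕ → MeasurableSpace Ω) (hG0 : G 0 = ⊥) (hGmono : Monotone G)
    (hGF : ∀ n, G n ≤ Filt X n)
    (hcid : ∀ f : S → ℝ, Measurable f → (∃ C, ∀ x, |f x| ≤ C) → ∀ n k : ℕ, n ≤ k →
      P[(fun ω => f (X k ω)) | G n] =ᵐ[P] P[(fun ω => f (X n ω)) | G n])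
    (hFG : ∀ n : ℕ, Filt X (n - ⌊g (n : ℝ)⌋₊) ≤ G n) :
    ∀ f : S → ℝ, Measurable f → (∃ C, ∀ x, |f x| ≤ C) →
      ∃ l : Ω → ℝ, TendstoInMeasure P
        (fun n ω => (∑ i ∈ Finset.range n, f (X i ω)) / n) atTop l := by

  intro f hfm hfC
  obtain ⟨C₀, hC₀⟩ := hfC
  set C : ℝ := |C₀| with hCdef
  have hCnonneg : 0 ≤ C := abs_nonneg _
  have hC : ∀ x, |f x| ≤ C := fun x => (hC₀ x).trans (le_abs_self _)
  -- basic measurability facts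
  have hFle : ∀ n, Filt X n ≤ ‹MeasurableSpace Ω› := by
    intro n
    exact iSup_le fun i => iSup_le fun _ => measurable_iff_comap_le.1 (hX i)
  have hFiltmono : Monotone (Filt X) := by
    intro a b hab
    refine iSup_le fun i => iSup_le fun hi => ?_
    exact le_iSup₂ (f := fun i (_ : i ∈ Finset.range b) =>
      MeasurableSpace.comap (X i) inferInstance) i
      (Finset.mem_range.2 (lt_of_lt_of_le (Finset.mem_range.1 hi) hab))
  set 𝒢 : Filtration ℕ ‹MeasurableSpace Ω› :=
    ⟨G, hGmono, fun n => (hGF n).trans (hFle n)⟩ with h𝒢def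
  have h𝒢 : ∀ n, 𝒢 n = G n := fun n => rfl
  set Y : ℕ → Ω → ℝ := fun i ω => f (X i ω) with hYdef
  have hYmeas : ∀ i, Measurable (Y i) := fun i => hfm.comp (hX i)
  have hYb : ∀ i ω, |Y i ω| ≤ C := fun i ω => hC _
  have hYint : ∀ i, Integrable (Y i) P := by
    intro i
    refine ⟨(hYmeas i).aestronglyMeasurable, ?_⟩
    exact HasFiniteIntegral.of_bounded (C := C) (ae_of_all _ fun ω => hYb i ω)
  -- the martingale M
  set M : ℕ → Ω → ℝ := fun n => P[Y n | G n] with hMdef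
  have hMint : ∀ n, Integrable (M n) P := fun n => integrable_condExp
  have hMb : ∀ n, ∀ᵐ ω ∂P, |M n ω| ≤ C := by
    intro n
    have := ae_bdd_condExp_of_ae_bdd (m := G n) (μ := P) (R := C.toNNReal)
      (f := Y n) (ae_of_all _ fun ω => by
        rw [Real.coe_toNNReal _ hCnonneg]; exact hYb n ω)
    filter_upwards [this] with ω hω
    rwa [Real.coe_toNNReal _ hCnonneg] at hω
  have hadp : StronglyAdapted 𝒢 M := fun n => stronglyMeasurable_condExp
  have hstep : ∀ n, M n =ᵐ[P] P[M (n + 1) | 𝒢 n] := by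
    intro n
    have h1 : P[M (n + 1) | G n] =ᵐ[P] P[Y (n + 1) | G n] :=
      condExp_condExp_of_le (hGmono (Nat.le_succ n)) (𝒢.le (n + 1))
    have h2 := hcid f hfm ⟨C, hC⟩ n (n + 1) (Nat.le_succ n)
    exact ((h1.trans h2).symm)
  have hmart : Martingale M 𝒢 P := martingale_nat hadp hMint hstep
  have hbdd : ∀ n, eLpNorm (M n) 1 P ≤ (C.toNNReal : ℝ≥0∞) := by
    intro n
    refine (eLpNorm_le_of_ae_bound (C := C) ((hMb n).mono fun ω h => by
      rwa [Real.norm_eq_abs])).trans ?_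
    simp [measure_univ, ENNReal.ofReal]
  set l : Ω → ℝ := 𝒢.limitProcess M P with hldef
  have hl : ∀ᵐ ω ∂P, Tendsto (fun n => M n ω) atTop (𝓝 (l ω)) :=
    hmart.submartingale.ae_tendsto_limitProcess hbdd
  -- Cesàro part converges a.e., hence in measure
  have hces : ∀ᵐ ω ∂P, Tendsto (fun n => (∑ i ∈ Finset.range n, M i ω) / n)
      atTop (𝓝 (l ω)) := by
    filter_upwards [hl] with ω hω
    simpa [div_eq_inv_mul] using hω.cesaro
  have part1 : TendstoInMeasure P (fun n ω => (∑ i ∈ Finset.range n, M i ω) / n)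
      atTop l := by
    refine tendstoInMeasure_of_tendsto_ae (fun n => ?_) hces
    exact ((integrable_finset_sum _ fun i _ => hMint i).div_const _).aestronglyMeasurable

  -- the difference process D i = Y i - M i
  set D : ℕ → Ω → ℝ := fun i => Y i - M i with hDdef
  have hDint : ∀ i, Integrable (D i) P := fun i => (hYint i).sub (hMint i)
  have hDb : ∀ i, ∀ᵐ ω ∂P, |D i ω| ≤ 2 * C := by
    intro i
    filter_upwards [hMb i] with ω hω
    have h1 := hYb i ω
    have h3 : |Y i ω - M i ω| ≤ |Y i ω| + |M i ω| := by
      simpa [sub_eq_add_neg] using abs_add_le (Y i ω) (-(M i ω))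
    simp only [hDdef, Pi.sub_apply]
    linarith
  have hprod : ∀ i j, Integrable (D i * D j) P := by
    intro i j
    refine ⟨(hDint i).aestronglyMeasurable.mul (hDint j).aestronglyMeasurable, ?_⟩
    refine HasFiniteIntegral.of_bounded (C := (2 * C) * (2 * C)) ?_
    filter_upwards [hDb i, hDb j] with ω h1 h2
    simp only [Pi.mul_apply, Real.norm_eq_abs, abs_mul]
    exact mul_le_mul h1 h2 (abs_nonneg _) (by linarith)
  -- orthogonality of remote increments
  set c : ℕ → ℕ := fun j => ⌊g (j : ℝ)⌋₊ with hcdef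
  have horth : ∀ i j : ℕ, i + 1 + c j ≤ j → ∫ ω, (D i * D j) ω ∂P = 0 := by
    intro i j hij
    simp only [hcdef] at hij
    have hilt : i < j := by omega
    have hYiG : Measurable[G j] (Y i) := by
      have h1 : MeasurableSpace.comap (X i) inferInstance ≤ Filt X (i + 1) :=
        le_iSup₂ (f := fun k (_ : k ∈ Finset.range (i + 1)) =>
          MeasurableSpace.comap (X k) inferInstance) i (Finset.mem_range.2 (Nat.lt_succ_self i))
      have h2 : Filt X (i + 1) ≤ G j :=
        le_trans (hFiltmono (Nat.le_sub_of_add_le hij)) (hFG j)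
      exact hfm.comp (measurable_iff_comap_le.2 (h1.trans h2))
    have hDiG : StronglyMeasurable[G j] (D i) :=
      (hYiG.stronglyMeasurable.sub (stronglyMeasurable_condExp.mono (hGmono hilt.le)))
    have hDj0 : P[D j | G j] =ᵐ[P] 0 := by
      have h1 : P[D j | G j] =ᵐ[P] P[Y j | G j] - P[M j | G j] :=
        condExp_sub (hYint j) (hMint j) (G j)
      have h2 : P[M j | G j] = M j :=
        condExp_of_stronglyMeasurable (𝒢.le j) stronglyMeasurable_condExp (hMint j)
      filter_upwards [h1] with ω hω
      rw [hω, h2, Pi.sub_apply]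
      simp [hMdef]
    have hmul := condExp_mul_of_stronglyMeasurable_left hDiG (hprod i j) (hDint j)
    have hzero : P[D i * D j | G j] =ᵐ[P] 0 := by
      refine hmul.trans ?_
      filter_upwards [hDj0] with ω hω
      simp [hω]
    have h0 := integral_condExp (μ := P) (f := D i * D j) (𝒢.le j)
    rw [← h0, integral_congr_ae hzero]
    simp
  -- the covariance matrix
  set a : ℕ → ℕ → ℝ := fun i j => ∫ ω, (D i * D j) ω ∂P with hadef
  set K : ℝ := 4 * C ^ 2 with hKdef
  have hKnn : 0 ≤ K := by positivity
  have hasymm : ∀ i j, a i j = a j i := by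
    intro i j
    simp only [hadef]
    congr 1
    funext ω
    simp [Pi.mul_apply, mul_comm]
  have habs : ∀ i j, |a i j| ≤ K := by
    intro i j
    simp only [hadef]
    have h1 : |∫ ω, (D i * D j) ω ∂P| ≤ ∫ ω, |(D i * D j) ω| ∂P := by
      simpa only [Real.norm_eq_abs] using norm_integral_le_integral_norm (μ := P) (D i * D j)
    refine h1.trans ?_
    have h2 : ∫ ω, |(D i * D j) ω| ∂P ≤ ∫ _ω, (2 * C) * (2 * C) ∂P := by
      refine integral_mono_ae (hprod i j).abs (integrable_const _) ?_
      filter_upwards [hDb i, hDb j] with ω h1 h2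
      simp only [Pi.mul_apply, abs_mul]
      exact mul_le_mul h1 h2 (abs_nonneg _) (by linarith)
    refine h2.trans ?_
    simp [hKdef]
    nlinarith [hCnonneg]
  have hifnn : ∀ (p : Prop) (_ : Decidable p), (0:ℝ) ≤ (if p then K else 0) := by
    intro p hp
    split_ifs
    · exact hKnn
    · exact le_rfl
  have hkey : ∀ i j, |a i j| ≤ (if i ≤ j ∧ j ≤ i + c j then K else 0) +
      (if j ≤ i ∧ i ≤ j + c i then K else 0) := by
    intro i j
    rcases le_total i j with h | h
    · by_cases h2 : j ≤ i + c j
      · rw [if_pos ⟨h, h2⟩]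
        exact le_add_of_le_of_nonneg (habs i j) (hifnn _ _)
      · have h3 : i + 1 + c j ≤ j := by omega
        simp only [hadef]
        rw [horth i j h3]
        simpa using add_nonneg (hifnn _ _) (hifnn _ _)
    · by_cases h2 : i ≤ j + c i
      · refine le_add_of_nonneg_of_le (hifnn _ _) ?_
        rw [if_pos ⟨h, h2⟩]
        exact habs i j
      · have h3 : j + 1 + c i ≤ i := by omega
        rw [hasymm i j]
        simp only [hadef]
        rw [horth j i h3]
        simpa using add_nonneg (hifnn _ _) (hifnn _ _)
  -- counting the near-diagonal pairs
  have hcount : ∀ n : ℕ, ∀ j, ∑ i ∈ Finset.range n,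
      (if i ≤ j ∧ j ≤ i + c j then K else 0) ≤ ((c j : ℝ) + 1) * K := by
    intro n j
    rw [← Finset.sum_filter, Finset.sum_const]
    have hsub : (Finset.range n).filter (fun i => i ≤ j ∧ j ≤ i + c j) ⊆
        Finset.Icc (j - c j) j := by
      intro i hi
      simp only [Finset.mem_filter, Finset.mem_range] at hi
      rw [Finset.mem_Icc]
      omega
    have hcard : ((Finset.range n).filter (fun i => i ≤ j ∧ j ≤ i + c j)).card ≤ c j + 1 := by
      refine (Finset.card_le_card hsub).trans ?_
      rw [Nat.card_Icc]
      omega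
    rw [nsmul_eq_mul]
    refine mul_le_mul_of_nonneg_right ?_ hKnn
    exact_mod_cast hcard
  -- double sum bound
  have hdouble : ∀ n : ℕ, ∑ i ∈ Finset.range n, ∑ j ∈ Finset.range n, a i j ≤
      2 * (∑ j ∈ Finset.range n, ((c j : ℝ) + 1)) * K := by
    intro n
    have h1 : ∑ i ∈ Finset.range n, ∑ j ∈ Finset.range n, a i j ≤
        ∑ i ∈ Finset.range n, ∑ j ∈ Finset.range n, |a i j| :=
      Finset.sum_le_sum fun i _ => Finset.sum_le_sum fun j _ => le_abs_self _
    have h2 : ∑ i ∈ Finset.range n, ∑ j ∈ Finset.range n, |a i j| ≤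
        ∑ i ∈ Finset.range n, ∑ j ∈ Finset.range n,
          ((if i ≤ j ∧ j ≤ i + c j then K else 0) + (if j ≤ i ∧ i ≤ j + c i then K else 0)) :=
      Finset.sum_le_sum fun i _ => Finset.sum_le_sum fun j _ => hkey i j
    have h3 : ∑ i ∈ Finset.range n, ∑ j ∈ Finset.range n,
          ((if i ≤ j ∧ j ≤ i + c j then K else 0) + (if j ≤ i ∧ i ≤ j + c i then K else 0))
        = 2 * ∑ j ∈ Finset.range n, ∑ i ∈ Finset.range n,
            (if i ≤ j ∧ j ≤ i + c j then K else 0) := by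
      simp only [Finset.sum_add_distrib]
      rw [two_mul]
      congr 1
      exact Finset.sum_comm
    have h4 : ∑ j ∈ Finset.range n, ∑ i ∈ Finset.range n,
          (if i ≤ j ∧ j ≤ i + c j then K else 0) ≤
        ∑ j ∈ Finset.range n, ((c j : ℝ) + 1) * K :=
      Finset.sum_le_sum fun j _ => hcount n j
    calc ∑ i ∈ Finset.range n, ∑ j ∈ Finset.range n, a i j
        ≤ ∑ i ∈ Finset.range n, ∑ j ∈ Finset.range n, |a i j| := h1
      _ ≤ _ := h2
      _ = _ := h3
      _ ≤ 2 * ∑ j ∈ Finset.range n, ((c j : ℝ) + 1) * K := by linarith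
      _ = 2 * (∑ j ∈ Finset.range n, ((c j : ℝ) + 1)) * K := by
          rw [← Finset.sum_mul]; ring
  -- integral comparison for g
  set c0 : ℝ := ∫ x in (0:ℝ)..(1:ℝ), g x with hc0def
  have hgInt : ∀ u v : ℝ, 0 ≤ u → 0 ≤ v → IntervalIntegrable g MeasureTheory.volume u v := by
    intro u v hu hv
    refine MonotoneOn.intervalIntegrable (hg_mono.mono ?_)
    intro x hx
    exact le_trans (le_inf hu hv) hx.1
  have hsumg : ∀ n : ℕ, 1 ≤ n → ∑ j ∈ Finset.range n, ((c j : ℝ) + 1) ≤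
      (n : ℝ) + c0 + ∫ x in (1:ℝ)..(n:ℝ), g x := by
    intro n hn
    have h1 : ∑ j ∈ Finset.range n, ((c j : ℝ) + 1) ≤ (∑ j ∈ Finset.range n, g (j : ℝ)) + n := by
      rw [Finset.sum_add_distrib, Finset.sum_const, Finset.card_range, nsmul_eq_mul, mul_one]
      refine add_le_add_left (Finset.sum_le_sum fun j _ => ?_) _
      exact Nat.floor_le (hg_nonneg _ (Nat.cast_nonneg j))
    have h2 : ∑ j ∈ Finset.range n, g (j : ℝ) ≤ ∫ x in (0:ℝ)..(0 + (n:ℕ) : ℝ), g x := by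
      have := MonotoneOn.sum_le_integral (x₀ := (0:ℝ)) (a := n) (f := g)
        (hg_mono.mono (fun x hx => hx.1))
      simpa using this
    have h3 : (∫ x in (0:ℝ)..((n:ℕ) : ℝ), g x) = c0 + ∫ x in (1:ℝ)..(n:ℝ), g x := by
      rw [hc0def]
      rw [← intervalIntegral.integral_add_adjacent_intervals (hgInt 0 1 le_rfl zero_le_one)
        (hgInt 1 n zero_le_one (Nat.cast_nonneg n))]
    have h4 : ∑ j ∈ Finset.range n, g (j : ℝ) ≤ c0 + ∫ x in (1:ℝ)..(n:ℝ), g x := by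
      rw [← h3]
      simpa using h2
    linarith
  -- variance of the partial sums
  have hSsq : ∀ n : ℕ, (fun ω => (∑ i ∈ Finset.range n, D i ω) ^ 2) =
      fun ω => ∑ i ∈ Finset.range n, ∑ j ∈ Finset.range n, (D i * D j) ω := by
    intro n
    funext ω
    rw [sq, Finset.sum_mul_sum]
    rfl
  have hSint : ∀ n : ℕ, Integrable (fun ω => (∑ i ∈ Finset.range n, D i ω) ^ 2) P := by
    intro n
    rw [hSsq n]
    exact integrable_finset_sum _ fun i _ => integrable_finset_sum _ fun j _ => hprod i j
  have hexp : ∀ n : ℕ, ∫ ω, (∑ i ∈ Finset.range n, D i ω) ^ 2 ∂P =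
      ∑ i ∈ Finset.range n, ∑ j ∈ Finset.range n, a i j := by
    intro n
    rw [hSsq n, integral_finset_sum _ fun i _ =>
      integrable_finset_sum _ fun j _ => hprod i j]
    exact Finset.sum_congr rfl fun i _ => integral_finset_sum _ fun j _ => hprod i j
  have hvar : ∀ n : ℕ, 1 ≤ n → ∫ ω, (∑ i ∈ Finset.range n, D i ω) ^ 2 ∂P ≤
      2 * K * ((n : ℝ) + c0 + ∫ x in (1:ℝ)..(n:ℝ), g x) := by
    intro n hn
    rw [hexp n]
    refine (hdouble n).trans ?_
    have := hsumg n hn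
    calc 2 * (∑ j ∈ Finset.range n, ((c j : ℝ) + 1)) * K
        ≤ 2 * ((n : ℝ) + c0 + ∫ x in (1:ℝ)..(n:ℝ), g x) * K := by
          refine mul_le_mul_of_nonneg_right ?_ hKnn
          linarith
      _ = 2 * K * ((n : ℝ) + c0 + ∫ x in (1:ℝ)..(n:ℝ), g x) := by ring
  -- Chebyshev and convergence in measure of the centered part
  have part2 : TendstoInMeasure P (fun n ω => (∑ i ∈ Finset.range n, D i ω) / n)
      atTop (fun _ => (0:ℝ)) := by
    rw [tendstoInMeasure_iff_dist]
    intro ε hε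
    have hcheb : ∀ n : ℕ, 1 ≤ n →
        P {ω | ε ≤ dist ((∑ i ∈ Finset.range n, D i ω) / n) 0} ≤
        ENNReal.ofReal ((2 * K * ((n : ℝ) + c0 + ∫ x in (1:ℝ)..(n:ℝ), g x)) /
          (ε ^ 2 * (n : ℝ) ^ 2)) := by
      intro n hn
      set Sq : Ω → ℝ := fun ω => (∑ i ∈ Finset.range n, D i ω) ^ 2 / (n : ℝ) ^ 2 with hSqdef
      have hSqint : Integrable Sq P := (hSint n).div_const _
      have hSqnn : 0 ≤ᵐ[P] Sq := ae_of_all _ fun ω => by positivity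
      have hsubset : {ω | ε ≤ dist ((∑ i ∈ Finset.range n, D i ω) / n) 0} ⊆
          {ω | ε ^ 2 ≤ Sq ω} := by
        intro ω hω
        simp only [Set.mem_setOf_eq, Real.dist_0_eq_abs] at hω ⊢
        have : ε ^ 2 ≤ |(∑ i ∈ Finset.range n, D i ω) / (n : ℝ)| ^ 2 :=
          pow_le_pow_left₀ hε.le hω 2
        rw [sq_abs, div_pow] at this
        exact this
      have hmarkov := mul_meas_ge_le_integral_of_nonneg hSqnn hSqint (ε ^ 2)
      have hεsq : (0:ℝ) < ε ^ 2 := by positivity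
      have hnsq : (0:ℝ) < (n : ℝ) ^ 2 := by
        have : (0:ℝ) < (n : ℝ) := by exact_mod_cast hn
        positivity
      have hintSq : ∫ ω, Sq ω ∂P = (∫ ω, (∑ i ∈ Finset.range n, D i ω) ^ 2 ∂P) / (n : ℝ) ^ 2 := by
        rw [hSqdef]
        exact integral_div _ _
      have htoReal : (P {ω | ε ^ 2 ≤ Sq ω}).toReal ≤
          (2 * K * ((n : ℝ) + c0 + ∫ x in (1:ℝ)..(n:ℝ), g x)) / (ε ^ 2 * (n : ℝ) ^ 2) := by
        have h5 : (P {ω | ε ^ 2 ≤ Sq ω}).toReal ≤ (∫ ω, Sq ω ∂P) / ε ^ 2 := by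
          rw [le_div_iff₀ hεsq, ← measureReal_def]
          linarith [hmarkov]
        refine h5.trans ?_
        rw [hintSq, div_div]
        rw [mul_comm ((n:ℝ)^2) (ε^2)]
        gcongr
        exact hvar n hn
      calc P {ω | ε ≤ dist ((∑ i ∈ Finset.range n, D i ω) / n) 0}
          ≤ P {ω | ε ^ 2 ≤ Sq ω} := measure_mono hsubset
        _ = ENNReal.ofReal ((P {ω | ε ^ 2 ≤ Sq ω}).toReal) :=
            (ENNReal.ofReal_toReal (measure_ne_top _ _)).symm
        _ ≤ _ := ENNReal.ofReal_le_ofReal htoReal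
    -- the real bound tends to zero
    have h1 : Tendsto (fun n : ℕ => 1 / (n : ℝ)) atTop (𝓝 0) :=
      tendsto_one_div_atTop_nhds_zero_nat
    have hB : Tendsto (fun n : ℕ =>
        (2 * K * ((n : ℝ) + c0 + ∫ x in (1:ℝ)..(n:ℝ), g x)) / (ε ^ 2 * (n : ℝ) ^ 2))
        atTop (𝓝 0) := by
      have h3 : Tendsto (fun n : ℕ => (2 * K / ε ^ 2) *
          (1 / (n : ℝ) + c0 * (1 / (n : ℝ)) * (1 / (n : ℝ)) +
            (∫ x in (1:ℝ)..(n:ℝ), g x) / (n : ℝ) ^ 2)) atTop (𝓝 0) := by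
        have := (((h1.add ((h1.const_mul c0).mul h1)).add hg_int).const_mul (2 * K / ε ^ 2))
        simpa using this
      refine h3.congr' ?_
      filter_upwards [eventually_ge_atTop 1] with n hn
      have hn' : (1:ℝ) ≤ (n : ℝ) := by exact_mod_cast hn
      have hn0 : (n : ℝ) ≠ 0 := by linarith
      field_simp
    have hB' : Tendsto (fun n : ℕ => ENNReal.ofReal
        ((2 * K * ((n : ℝ) + c0 + ∫ x in (1:ℝ)..(n:ℝ), g x)) / (ε ^ 2 * (n : ℝ) ^ 2)))
        atTop (𝓝 0) := by
      simpa using ENNReal.tendsto_ofReal hB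
    refine tendsto_of_tendsto_of_tendsto_of_le_of_le' tendsto_const_nhds hB'
      (Eventually.of_forall fun n => zero_le) ?_
    filter_upwards [eventually_ge_atTop 1] with n hn
    exact hcheb n hn
  -- combine the two parts
  refine ⟨l, ?_⟩
  have hfinal := tendstoInMeasure_add' part2 part1
  refine TendstoInMeasure.congr (fun n => ?_) ?_ hfinal
  · refine ae_of_all _ fun ω => ?_
    show (∑ i ∈ Finset.range n, D i ω) / n + (∑ i ∈ Finset.range n, M i ω) / n
      = (∑ i ∈ Finset.range n, f (X i ω)) / n
    rw [← add_div]
    congr 1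
    rw [← Finset.sum_add_distrib]
    refine Finset.sum_congr rfl fun i _ => ?_
    simp [hDdef, hYdef]
  · exact ae_of_all _ fun ω => zero_add (l ω)
end

section
/- If for each bounded Borel function f : S → ℝ the sequence α_n(f) converges in probability, then E[ f(X_{n+2}) − f(X_{n+1}) | 𝓕_n ] → 0 in probability for each bounded Borel function f. -/
set_option maxHeartbeats 1000000


open MeasureTheory ProbabilityTheory Filter Topology
open scoped ENNReal NNReal

variable {Ω S : Type*}

/-- necessity of condition (7): if `α_n(f)` converges in probability for
each bounded Borel `f`, then `E[f(X_{n+2}) − f(X_{n+1}) ∣ 𝓕_n] → 0` in probability for each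
bounded Borel `f`. -/
theorem stmt17 [MeasurableSpace Ω]
    [TopologicalSpace S] [PolishSpace S] [MeasurableSpace S] [BorelSpace S]
    (P : Measure Ω) [IsProbabilityMeasure P]
    (X : ℕ → Ω → S) (hX : ∀ i, Measurable (X i))
    (hconv : (∀ f : S → ℝ, Measurable f → (∃ C, ∀ x, |f x| ≤ C) →
      ∃ l : Ω → ℝ, TendstoInMeasure P (fun n => predMean P X f n) atTop l)) :
    ∀ f : S → ℝ, Measurable f → (∃ C, ∀ x, |f x| ≤ C) →
      TendstoInMeasure P
        (fun n => P[(fun ω => f (X (n + 1) ω) - f (X n ω)) | Filt X n]) atTop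
        (fun _ => 0) := by
  intro f hf hCex
  obtain ⟨C₀, hC₀⟩ := hCex
  -- use a nonnegative bound
  set C : ℝ≥0 := C₀.toNNReal with hCdef
  have hC : ∀ x, |f x| ≤ (C : ℝ) := fun x => (hC₀ x).trans (Real.le_coe_toNNReal C₀)
  have hle : ∀ n, Filt X n ≤ (inferInstance : MeasurableSpace Ω) := by
    intro n
    refine iSup₂_le fun i _ => ?_
    exact MeasurableSpace.comap_le_iff_le_map.mpr fun s hs => (hX i) hs
  have hmono : ∀ n, Filt X n ≤ Filt X (n + 1) := by
    intro n
    refine iSup₂_le fun i hi => ?_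
    exact le_iSup₂ (f := fun i (_ : i ∈ Finset.range (n+1)) =>
      MeasurableSpace.comap (X i) inferInstance) i
      (Finset.mem_range.mpr ((Finset.mem_range.mp hi).trans (Nat.lt_succ_self n)))
  -- integrability of f ∘ X n
  have hfXmeas : ∀ n, Measurable fun ω => f (X n ω) := fun n => hf.comp (hX n)
  have hfXint : ∀ n, Integrable (fun ω => f (X n ω)) P := by
    intro n
    refine (memLp_top_of_bound (hfXmeas n).aestronglyMeasurable (C : ℝ) ?_).integrable le_top
    exact Eventually.of_forall fun ω => by
      simpa [Real.norm_eq_abs] using hC (X n ω)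
  set g : ℕ → Ω → ℝ := fun n => predMean P X f n with hgdef
  -- boundedness of the predictive means
  have hgbdd : ∀ n, ∀ᵐ ω ∂P, |g n ω| ≤ (C : ℝ) := by
    intro n
    exact ae_bdd_condExp_of_ae_bdd (Eventually.of_forall fun ω => hC (X n ω))
  have hgsm : ∀ n, StronglyMeasurable (g n) := fun n =>
    (stronglyMeasurable_condExp).mono (hle n)
  have hgmem : ∀ n, MemLp (g n) 1 P := by
    intro n
    refine (memLp_top_of_bound (hgsm n).aestronglyMeasurable (C : ℝ) ?_).mono_exponent
      le_top
    filter_upwards [hgbdd n] with ω hω using by simpa [Real.norm_eq_abs] using hω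
  -- the limit in probability
  obtain ⟨l, hl⟩ := hconv f hf ⟨C₀, hC₀⟩
  -- a.e. bound and measurability for l via an a.e. convergent subsequence
  obtain ⟨ms, hms_mono, hms⟩ := hl.exists_seq_tendsto_ae
  have hlsm : AEStronglyMeasurable l P := by
    refine aestronglyMeasurable_of_tendsto_ae atTop
      (fun k => (hgsm (ms k)).aestronglyMeasurable) hms
  have hlbdd : ∀ᵐ ω ∂P, |l ω| ≤ (C : ℝ) := by
    have h := ae_all_iff.2 fun k => hgbdd (ms k)
    filter_upwards [h, hms] with ω hω hten
    exact le_of_tendsto ((continuous_abs.tendsto _).comp hten)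
      (Eventually.of_forall fun k => hω k)
  have hlmem : MemLp l 1 P := by
    refine (memLp_top_of_bound hlsm (C : ℝ) ?_).mono_exponent le_top
    filter_upwards [hlbdd] with ω hω using by simpa [Real.norm_eq_abs] using hω
  -- uniform integrability of the uniformly bounded family g
  have hUI : UnifIntegrable g 1 P := by
    intro ε hε
    refine ⟨ε / ((C : ℝ) + 1), by positivity, fun n s hs hμs => ?_⟩
    have h1 : eLpNorm (s.indicator (g n)) 1 P = eLpNorm (g n) 1 (P.restrict s) :=
      eLpNorm_indicator_eq_eLpNorm_restrict hs
    rw [h1]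
    have h2 : eLpNorm (g n) 1 (P.restrict s) ≤
        ((P.restrict s) Set.univ) ^ ((1 : ℝ≥0∞).toReal⁻¹) * ENNReal.ofReal (C : ℝ) := by
      refine eLpNorm_le_of_ae_bound ?_
      filter_upwards [ae_restrict_of_ae (hgbdd n)] with ω hω using by
        simpa [Real.norm_eq_abs] using hω
    refine h2.trans ?_
    simp only [Measure.restrict_apply_univ, ENNReal.toReal_one, inv_one, ENNReal.rpow_one]
    calc P s * ENNReal.ofReal (C : ℝ)
        ≤ ENNReal.ofReal (ε / ((C : ℝ) + 1)) * ENNReal.ofReal (C : ℝ) :=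
          mul_le_mul_left hμs _
      _ = ENNReal.ofReal (ε / ((C : ℝ) + 1) * (C : ℝ)) := by
          rw [ENNReal.ofReal_mul (by positivity)]
      _ ≤ ENNReal.ofReal ε := by
          refine ENNReal.ofReal_le_ofReal ?_
          rw [div_mul_eq_mul_div]
          rw [div_le_iff₀ (by positivity)]
          nlinarith [hε.le, C.coe_nonneg]
  -- L¹ convergence of g to l
  have hL1 : Tendsto (fun n => eLpNorm (g n - l) 1 P) atTop (𝓝 0) :=
    tendsto_Lp_finite_of_tendstoInMeasure le_rfl ENNReal.one_ne_top
      (fun n => (hgsm n).aestronglyMeasurable) hlmem hUI hl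
  -- identify the conditional expectation
  have hkey : ∀ n, (P[(fun ω => f (X (n + 1) ω) - f (X n ω)) | Filt X n])
      =ᵐ[P] P[(fun ω => g (n + 1) ω - g n ω) | Filt X n] := by
    intro n
    have h1 : (P[(fun ω => f (X (n + 1) ω) - f (X n ω)) | Filt X n])
        =ᵐ[P] P[(fun ω => f (X (n + 1) ω)) | Filt X n] - P[(fun ω => f (X n ω)) | Filt X n] :=
      condExp_sub (hfXint (n + 1)) (hfXint n) _
    have h2 : (P[(fun ω => f (X (n + 1) ω)) | Filt X n])
        =ᵐ[P] P[(fun ω => g (n + 1) ω) | Filt X n] :=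
      (condExp_condExp_of_le (hmono n) (hle (n + 1))).symm
    have hgnint : Integrable (g n) P := (hgmem n).integrable le_rfl
    have hgn1int : Integrable (g (n + 1)) P := (hgmem (n + 1)).integrable le_rfl
    have h3 : P[g n | Filt X n] = g n :=
      condExp_of_stronglyMeasurable (hle n) stronglyMeasurable_condExp hgnint
    have h4 : (P[(fun ω => g (n + 1) ω - g n ω) | Filt X n])
        =ᵐ[P] P[(fun ω => g (n + 1) ω) | Filt X n] - P[g n | Filt X n] :=
      condExp_sub hgn1int hgnint _
    calc (P[(fun ω => f (X (n + 1) ω) - f (X n ω)) | Filt X n])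
        =ᵐ[P] P[(fun ω => f (X (n + 1) ω)) | Filt X n] - P[(fun ω => f (X n ω)) | Filt X n] := h1
      _ =ᵐ[P] P[(fun ω => g (n + 1) ω) | Filt X n] - P[g n | Filt X n] := by
          rw [h3]
          exact h2.sub (ae_eq_refl _)
      _ =ᵐ[P] P[(fun ω => g (n + 1) ω - g n ω) | Filt X n] := h4.symm
  -- L¹ bound on the conditional expectations
  have hbound : ∀ n, eLpNorm (P[(fun ω => f (X (n + 1) ω) - f (X n ω)) | Filt X n]) 1 P ≤
      eLpNorm (g (n + 1) - l) 1 P + eLpNorm (g n - l) 1 P := by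
    intro n
    rw [eLpNorm_congr_ae (hkey n)]
    refine (eLpNorm_one_condExp_le_eLpNorm _).trans ?_
    have : (fun ω => g (n + 1) ω - g n ω) = (g (n + 1) - l) + (fun ω => l ω - g n ω) := by
      funext ω; simp
    rw [this]
    refine (eLpNorm_add_le ((hgsm (n + 1)).aestronglyMeasurable.sub hlsm)
      (hlsm.sub (hgsm n).aestronglyMeasurable) le_rfl).trans ?_
    gcongr
    rw [← neg_sub l (g n), eLpNorm_neg]
  -- conclude: L¹ norms tend to 0
  have hsum : Tendsto (fun n => eLpNorm (g (n + 1) - l) 1 P + eLpNorm (g n - l) 1 P)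
      atTop (𝓝 0) := by
    have h1 : Tendsto (fun n => eLpNorm (g (n + 1) - l) 1 P) atTop (𝓝 0) :=
      hL1.comp (tendsto_add_atTop_nat 1)
    simpa using h1.add hL1
  have htend : Tendsto (fun n =>
      eLpNorm (P[(fun ω => f (X (n + 1) ω) - f (X n ω)) | Filt X n]) 1 P) atTop (𝓝 0) :=
    tendsto_of_tendsto_of_tendsto_of_le_of_le tendsto_const_nhds hsum
      (fun n => zero_le) hbound
  have htend' : Tendsto (fun n =>
      eLpNorm ((P[(fun ω => f (X (n + 1) ω) - f (X n ω)) | Filt X n]) - (fun _ => (0 : ℝ)))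
        1 P) atTop (𝓝 0) := by
    refine htend.congr fun n => ?_
    congr 1
    funext ω
    simp
  exact tendstoInMeasure_of_tendsto_eLpNorm (p := 1) one_ne_zero
    (fun n => (stronglyMeasurable_condExp.mono (hle n)).aestronglyMeasurable)
    aestronglyMeasurable_zero htend'
end

section
/- Let m ≥ 1 and let (Y_n) be an i.i.d. sequence of real non-degenerate random variables. Define X_n = Y_n − Y_{n+m}. Then X = (X_n) is stationary and m-dependent, but X is not asymptotically exchangeable: the shifted sequences (X_{n+1}, X_{n+2}, …) do not converge in distribution to any exchangeable sequence. -/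
open MeasureTheory ProbabilityTheory Filter Topology
open scoped ENNReal NNReal

variable {Ω S : Type*}

set_option linter.unusedSectionVars false

section helpers
variable {Ω' : Type*} [MeasurableSpace Ω'] (P : Measure Ω') [IsProbabilityMeasure P]

lemma bdd_integrable' {f : Ω' → ℝ} (hf : Measurable f) (hb : ∀ ω, ‖f ω‖ ≤ 1) :
    Integrable f P :=
  (integrable_const (1:ℝ)).mono' hf.aestronglyMeasurable (ae_of_all _ hb)

lemma iid_shift_law (Y : ℕ → Ω' → ℝ) (hY : ∀ i, Measurable (Y i))
    (hindep : iIndepFun Y P)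
    (hid : ∀ i, P.map (Y i) = P.map (Y 0)) :
    P.map (fun ω (i : ℕ) => Y (i + 1) ω) = P.map (fun ω (i : ℕ) => Y i ω) := by
  classical
  have hm1 : Measurable (fun ω (i : ℕ) => Y (i + 1) ω) :=
    measurable_pi_lambda _ fun i => hY (i + 1)
  have hm2 : Measurable (fun ω (i : ℕ) => Y i ω) := measurable_pi_lambda _ fun i => hY i
  have h1 : IsProbabilityMeasure (P.map (fun ω (i : ℕ) => Y (i + 1) ω)) :=
    Measure.isProbabilityMeasure_map hm1.aemeasurable
  have h2 : IsProbabilityMeasure (P.map (fun ω (i : ℕ) => Y i ω)) :=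
    Measure.isProbabilityMeasure_map hm2.aemeasurable
  refine ext_of_generate_finite
      (squareCylinders fun _ : ℕ => {s : Set ℝ | MeasurableSet s})
      generateFrom_squareCylinders.symm
      (isPiSystem_squareCylinders
        (fun _ s hs t ht _ => by
          simp only [Set.mem_setOf_eq] at *; exact hs.inter ht)
        (fun _ => by simp only [Set.mem_setOf_eq]; exact MeasurableSet.univ)) ?_ (by simp)
  rintro S ⟨s, t, ht, rfl⟩
  simp only [Set.mem_univ_pi, Set.mem_setOf_eq] at ht
  have htm : MeasurableSet ((s : Set ℕ).pi t) :=
    MeasurableSet.pi s.countable_toSet fun i _ => ht i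
  rw [Measure.map_apply hm1 htm, Measure.map_apply hm2 htm]
  have hp1 : (fun ω (i : ℕ) => Y (i+1) ω) ⁻¹' ((s : Set ℕ).pi t) = ⋂ i ∈ s, Y (i+1) ⁻¹' t i := by
    ext ω; simp [Set.mem_pi]
  have hp2 : (fun ω (i : ℕ) => Y i ω) ⁻¹' ((s : Set ℕ).pi t) = ⋂ i ∈ s, Y i ⁻¹' t i := by
    ext ω; simp [Set.mem_pi]
  rw [hp1, hp2]
  have hre : (⋂ i ∈ s, Y (i+1) ⁻¹' t i) = ⋂ j ∈ s.image (· + 1), Y j ⁻¹' t (j - 1) := by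
    ext ω
    simp only [Set.mem_iInter, Finset.mem_image]
    constructor
    · rintro h j ⟨i, hi, rfl⟩
      simpa using h i hi
    · intro h i hi
      simpa using h (i + 1) ⟨i, hi, rfl⟩
  have hval : ∀ (k : ℕ) (u : Set ℝ), MeasurableSet u → P (Y k ⁻¹' u) = (P.map (Y 0)) u := by
    intro k u hu
    rw [← hid k, Measure.map_apply (hY k) hu]
  rw [hre,
    hindep.measure_inter_preimage_eq_mul (s.image (· + 1)) (sets := fun j => t (j-1))
      (fun i _ => ht _),
    hindep.measure_inter_preimage_eq_mul s (sets := t) (fun i _ => ht i),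
    Finset.prod_image (by intro a _ b _ h; simp only at h; omega)]
  refine Finset.prod_congr rfl fun i _ => ?_
  show P (Y (i+1) ⁻¹' t i) = P (Y i ⁻¹' t i)
  rw [hval (i+1) (t i) (ht i), hval i (t i) (ht i)]

lemma X_station (m : ℕ) (Y : ℕ → Ω' → ℝ) (hY : ∀ i, Measurable (Y i))
    (hindep : iIndepFun Y P)
    (hid : ∀ i, P.map (Y i) = P.map (Y 0))
    (X : ℕ → Ω' → ℝ) (hXdef : ∀ n ω, X n ω = Y n ω - Y (n + m) ω) :
    P.map (fun ω (i : ℕ) => X (i + 1) ω) = P.map (fun ω (i : ℕ) => X i ω) := by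
  have hT : Measurable (fun (y : ℕ → ℝ) (i : ℕ) => y i - y (i + m)) :=
    measurable_pi_lambda _ fun i => (measurable_pi_apply i).sub (measurable_pi_apply (i + m))
  have e1 : (fun ω (i : ℕ) => X (i+1) ω)
      = (fun (y : ℕ → ℝ) (i : ℕ) => y i - y (i + m)) ∘ (fun ω (i : ℕ) => Y (i+1) ω) := by
    funext ω i
    simp only [Function.comp_apply, hXdef]
    rw [Nat.add_right_comm]
  have e2 : (fun ω (i : ℕ) => X i ω)
      = (fun (y : ℕ → ℝ) (i : ℕ) => y i - y (i + m)) ∘ (fun ω (i : ℕ) => Y i ω) := by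
    funext ω i
    simp [hXdef]
  rw [e1, e2, ← Measure.map_map hT (measurable_pi_lambda _ fun i => hY (i+1)),
    ← Measure.map_map hT (measurable_pi_lambda _ fun i => hY i),
    iid_shift_law P Y hY hindep hid]

lemma X_mdep (m : ℕ) (Y : ℕ → Ω' → ℝ) (hY : ∀ i, Measurable (Y i))
    (hindep : iIndepFun Y P)
    (X : ℕ → Ω' → ℝ) (hXdef : ∀ n ω, X n ω = Y n ω - Y (n + m) ω) (n : ℕ) :
    Indep (Filt X n)
      (⨆ i ∈ {i : ℕ | n + m ≤ i}, MeasurableSpace.comap (X i) inferInstance) P := by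
  have hXeq : ∀ i, X i = fun ω => Y i ω - Y (i + m) ω := fun i => funext (hXdef i)
  have hbase : Indep (⨆ j ∈ {j : ℕ | j < n + m}, MeasurableSpace.comap (Y j) inferInstance)
      (⨆ j ∈ {j : ℕ | n + m ≤ j}, MeasurableSpace.comap (Y j) inferInstance) P :=
    indep_iSup_of_disjoint (fun j => (hY j).comap_le) hindep.iIndep
      (Set.disjoint_left.mpr fun {j} hj hj' => by
        simp only [Set.mem_setOf_eq] at hj hj'; omega)
  refine indep_of_indep_of_le_left (indep_of_indep_of_le_right hbase ?_) ?_
  · refine iSup₂_le fun i hi => ?_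
    have hi' : n + m ≤ i := hi
    have hYm : Measurable[⨆ j ∈ {j : ℕ | n + m ≤ j}, MeasurableSpace.comap (Y j) inferInstance]
        (X i) := by
      rw [hXeq i]
      have h1 : Measurable[⨆ j ∈ {j : ℕ | n + m ≤ j},
          MeasurableSpace.comap (Y j) inferInstance] (Y i) :=
        Measurable.of_comap_le (le_biSup (fun j => MeasurableSpace.comap (Y j) inferInstance) (show i ∈ {j : ℕ | n + m ≤ j} from hi'))
      have h2 : Measurable[⨆ j ∈ {j : ℕ | n + m ≤ j},
          MeasurableSpace.comap (Y j) inferInstance] (Y (i + m)) :=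
        Measurable.of_comap_le (le_biSup (fun j => MeasurableSpace.comap (Y j) inferInstance) (show i + m ∈ {j : ℕ | n + m ≤ j} by
          simp only [Set.mem_setOf_eq]; omega))
      exact h1.sub h2
    exact hYm.comap_le
  · refine iSup₂_le fun i hi => ?_
    have hi' : i < n := Finset.mem_range.mp hi
    have hYm : Measurable[⨆ j ∈ {j : ℕ | j < n + m}, MeasurableSpace.comap (Y j) inferInstance]
        (X i) := by
      rw [hXeq i]
      have h1 : Measurable[⨆ j ∈ {j : ℕ | j < n + m},
          MeasurableSpace.comap (Y j) inferInstance] (Y i) :=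
        Measurable.of_comap_le (le_biSup (fun j => MeasurableSpace.comap (Y j) inferInstance) (show i ∈ {j : ℕ | j < n + m} by
          simp only [Set.mem_setOf_eq]; omega))
      have h2 : Measurable[⨆ j ∈ {j : ℕ | j < n + m},
          MeasurableSpace.comap (Y j) inferInstance] (Y (i + m)) :=
        Measurable.of_comap_le (le_biSup (fun j => MeasurableSpace.comap (Y j) inferInstance) (show i + m ∈ {j : ℕ | j < n + m} by
          simp only [Set.mem_setOf_eq]; omega))
      exact h1.sub h2
    exact hYm.comap_le

lemma trig_marg (Y : ℕ → Ω' → ℝ) (hY : ∀ i, Measurable (Y i))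
    (hid : ∀ i, P.map (Y i) = P.map (Y 0)) (t : ℝ) (k : ℕ) :
    (∫ ω, Real.cos (t * Y k ω) ∂P) = ∫ ω, Real.cos (t * Y 0 ω) ∂P := by
  have hφ : Measurable fun x : ℝ => Real.cos (t * x) :=
    Real.measurable_cos.comp (measurable_id.const_mul t)
  have h1 : ∫ ω, Real.cos (t * Y k ω) ∂P
      = ∫ x, Real.cos (t * x) ∂(P.map (Y k)) :=
    (integral_map (hY k).aemeasurable hφ.aestronglyMeasurable).symm
  rw [h1, hid k, integral_map (hY 0).aemeasurable hφ.aestronglyMeasurable]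

lemma trig_marg_sin (Y : ℕ → Ω' → ℝ) (hY : ∀ i, Measurable (Y i))
    (hid : ∀ i, P.map (Y i) = P.map (Y 0)) (t : ℝ) (k : ℕ) :
    (∫ ω, Real.sin (t * Y k ω) ∂P) = ∫ ω, Real.sin (t * Y 0 ω) ∂P := by
  have hφ : Measurable fun x : ℝ => Real.sin (t * x) :=
    Real.measurable_sin.comp (measurable_id.const_mul t)
  have h1 : ∫ ω, Real.sin (t * Y k ω) ∂P
      = ∫ x, Real.sin (t * x) ∂(P.map (Y k)) :=
    (integral_map (hY k).aemeasurable hφ.aestronglyMeasurable).symm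
  rw [h1, hid k, integral_map (hY 0).aemeasurable hφ.aestronglyMeasurable]

lemma cos_sub_int (Y : ℕ → Ω' → ℝ) (hY : ∀ i, Measurable (Y i))
    (hindep : iIndepFun Y P)
    (hid : ∀ i, P.map (Y i) = P.map (Y 0)) (t : ℝ) {i j : ℕ} (hij : i ≠ j) :
    ∫ ω, Real.cos (t * (Y i ω - Y j ω)) ∂P
      = (∫ ω, Real.cos (t * Y 0 ω) ∂P) * (∫ ω, Real.cos (t * Y 0 ω) ∂P)
        + (∫ ω, Real.sin (t * Y 0 ω) ∂P) * (∫ ω, Real.sin (t * Y 0 ω) ∂P) := by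
  have hmc : ∀ k, Measurable fun ω => Real.cos (t * Y k ω) :=
    fun k => Real.measurable_cos.comp ((hY k).const_mul t)
  have hms : ∀ k, Measurable fun ω => Real.sin (t * Y k ω) :=
    fun k => Real.measurable_sin.comp ((hY k).const_mul t)
  have hic : ∀ k, Integrable (fun ω => Real.cos (t * Y k ω)) P := fun k =>
    bdd_integrable' P (hmc k) fun ω => by
      rw [Real.norm_eq_abs]; exact Real.abs_cos_le_one _
  have his : ∀ k, Integrable (fun ω => Real.sin (t * Y k ω)) P := fun k =>
    bdd_integrable' P (hms k) fun ω => by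
      rw [Real.norm_eq_abs]; exact Real.abs_sin_le_one _
  have hiprod : ∀ (f g : Ω' → ℝ), Measurable f → Measurable g →
      (∀ ω, |f ω| ≤ 1) → (∀ ω, |g ω| ≤ 1) → Integrable (fun ω => f ω * g ω) P :=
    fun f g hf hg hbf hbg => bdd_integrable' P (hf.mul hg) fun ω => by
      rw [Real.norm_eq_abs, abs_mul]
      calc |f ω| * |g ω| ≤ 1 * 1 :=
            mul_le_mul (hbf ω) (hbg ω) (abs_nonneg _) zero_le_one
        _ = 1 := mul_one 1
  have hrw : (fun ω => Real.cos (t * (Y i ω - Y j ω)))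
      = fun ω => Real.cos (t * Y i ω) * Real.cos (t * Y j ω)
          + Real.sin (t * Y i ω) * Real.sin (t * Y j ω) := by
    funext ω; rw [mul_sub, Real.cos_sub]
  rw [hrw, integral_add
    (hiprod _ _ (hmc i) (hmc j) (fun ω => Real.abs_cos_le_one _)
      (fun ω => Real.abs_cos_le_one _))
    (hiprod _ _ (hms i) (hms j) (fun ω => Real.abs_sin_le_one _)
      (fun ω => Real.abs_sin_le_one _))]
  have hi1 : IndepFun (fun ω => Real.cos (t * Y i ω)) (fun ω => Real.cos (t * Y j ω)) P :=
    (hindep.indepFun hij).comp (Real.measurable_cos.comp (measurable_id.const_mul t))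
      (Real.measurable_cos.comp (measurable_id.const_mul t))
  have hi2 : IndepFun (fun ω => Real.sin (t * Y i ω)) (fun ω => Real.sin (t * Y j ω)) P :=
    (hindep.indepFun hij).comp (Real.measurable_sin.comp (measurable_id.const_mul t))
      (Real.measurable_sin.comp (measurable_id.const_mul t))
  have e1 : ∫ ω, Real.cos (t * Y i ω) * Real.cos (t * Y j ω) ∂P
      = (∫ ω, Real.cos (t * Y i ω) ∂P) * ∫ ω, Real.cos (t * Y j ω) ∂P :=
    hi1.integral_fun_mul_eq_mul_integral (hic i).aestronglyMeasurable (hic j).aestronglyMeasurable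
  have e2 : ∫ ω, Real.sin (t * Y i ω) * Real.sin (t * Y j ω) ∂P
      = (∫ ω, Real.sin (t * Y i ω) ∂P) * ∫ ω, Real.sin (t * Y j ω) ∂P :=
    hi2.integral_fun_mul_eq_mul_integral (his i).aestronglyMeasurable (his j).aestronglyMeasurable
  rw [e1, e2, trig_marg P Y hY hid t i, trig_marg P Y hY hid t j,
    trig_marg_sin P Y hY hid t i, trig_marg_sin P Y hY hid t j]

lemma sin_sub_int (Y : ℕ → Ω' → ℝ) (hY : ∀ i, Measurable (Y i))
    (hindep : iIndepFun Y P)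
    (hid : ∀ i, P.map (Y i) = P.map (Y 0)) (t : ℝ) {i j : ℕ} (hij : i ≠ j) :
    ∫ ω, Real.sin (t * (Y i ω - Y j ω)) ∂P = 0 := by
  have hmc : ∀ k, Measurable fun ω => Real.cos (t * Y k ω) :=
    fun k => Real.measurable_cos.comp ((hY k).const_mul t)
  have hms : ∀ k, Measurable fun ω => Real.sin (t * Y k ω) :=
    fun k => Real.measurable_sin.comp ((hY k).const_mul t)
  have hic : ∀ k, Integrable (fun ω => Real.cos (t * Y k ω)) P := fun k =>
    bdd_integrable' P (hmc k) fun ω => by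
      rw [Real.norm_eq_abs]; exact Real.abs_cos_le_one _
  have his : ∀ k, Integrable (fun ω => Real.sin (t * Y k ω)) P := fun k =>
    bdd_integrable' P (hms k) fun ω => by
      rw [Real.norm_eq_abs]; exact Real.abs_sin_le_one _
  have hiprod : ∀ (f g : Ω' → ℝ), Measurable f → Measurable g →
      (∀ ω, |f ω| ≤ 1) → (∀ ω, |g ω| ≤ 1) → Integrable (fun ω => f ω * g ω) P :=
    fun f g hf hg hbf hbg => bdd_integrable' P (hf.mul hg) fun ω => by
      rw [Real.norm_eq_abs, abs_mul]
      calc |f ω| * |g ω| ≤ 1 * 1 :=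
            mul_le_mul (hbf ω) (hbg ω) (abs_nonneg _) zero_le_one
        _ = 1 := mul_one 1
  have hrw : (fun ω => Real.sin (t * (Y i ω - Y j ω)))
      = fun ω => Real.sin (t * Y i ω) * Real.cos (t * Y j ω)
          - Real.cos (t * Y i ω) * Real.sin (t * Y j ω) := by
    funext ω; rw [mul_sub, Real.sin_sub]
  rw [hrw, integral_sub
    (hiprod _ _ (hms i) (hmc j) (fun ω => Real.abs_sin_le_one _)
      (fun ω => Real.abs_cos_le_one _))
    (hiprod _ _ (hmc i) (hms j) (fun ω => Real.abs_cos_le_one _)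
      (fun ω => Real.abs_sin_le_one _))]
  have hi1 : IndepFun (fun ω => Real.sin (t * Y i ω)) (fun ω => Real.cos (t * Y j ω)) P :=
    (hindep.indepFun hij).comp (Real.measurable_sin.comp (measurable_id.const_mul t))
      (Real.measurable_cos.comp (measurable_id.const_mul t))
  have hi2 : IndepFun (fun ω => Real.cos (t * Y i ω)) (fun ω => Real.sin (t * Y j ω)) P :=
    (hindep.indepFun hij).comp (Real.measurable_cos.comp (measurable_id.const_mul t))
      (Real.measurable_sin.comp (measurable_id.const_mul t))
  have e1 : ∫ ω, Real.sin (t * Y i ω) * Real.cos (t * Y j ω) ∂P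
      = (∫ ω, Real.sin (t * Y i ω) ∂P) * ∫ ω, Real.cos (t * Y j ω) ∂P :=
    hi1.integral_fun_mul_eq_mul_integral (his i).aestronglyMeasurable (hic j).aestronglyMeasurable
  have e2 : ∫ ω, Real.cos (t * Y i ω) * Real.sin (t * Y j ω) ∂P
      = (∫ ω, Real.cos (t * Y i ω) ∂P) * ∫ ω, Real.sin (t * Y j ω) ∂P :=
    hi2.integral_fun_mul_eq_mul_integral (hic i).aestronglyMeasurable (his j).aestronglyMeasurable
  rw [e1, e2, trig_marg P Y hY hid t i, trig_marg P Y hY hid t j,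
    trig_marg_sin P Y hY hid t i, trig_marg_sin P Y hY hid t j]
  ring


end helpers

/-- Example `f56n9m2q`: if `(Y_n)` is i.i.d. real non-degenerate,
`m ≥ 1` and `X_n = Y_n − Y_{n+m}`, then `X` is stationary and `m`-dependent, but not
asymptotically exchangeable. -/
theorem stmt18 [MeasurableSpace Ω] (P : Measure Ω) [IsProbabilityMeasure P]
    (m : ℕ) (hm : 1 ≤ m)
    (Y : ℕ → Ω → ℝ) (hY : ∀ i, Measurable (Y i))
    (hindep : iIndepFun Y P)
    (hid : ∀ i, P.map (Y i) = P.map (Y 0))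
    (hnd : ¬ ∃ c : ℝ, ∀ᵐ ω ∂P, Y 0 ω = c)
    (X : ℕ → Ω → ℝ) (hXdef : ∀ n ω, X n ω = Y n ω - Y (n + m) ω) :
    P.map (fun ω (i : ℕ) => X (i + 1) ω) = P.map (fun ω (i : ℕ) => X i ω) ∧
    (∀ n, Indep (Filt X n)
      (⨆ i ∈ {i : ℕ | n + m ≤ i}, MeasurableSpace.comap (X i) inferInstance) P) ∧
    ¬ ∃ Q : Measure (ℕ → ℝ), IsProbabilityMeasure Q ∧
      (∀ σ : Equiv.Perm ℕ, {i : ℕ | σ i ≠ i}.Finite → Q.map (fun y i => y (σ i)) = Q) ∧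
      (∀ g : BoundedContinuousFunction (ℕ → ℝ) ℝ,
        Tendsto (fun n => ∫ ω, g (fun i => X (n + i) ω) ∂P) atTop (𝓝 (∫ y, g y ∂Q))) := by
  classical
  have hX : ∀ i, Measurable (X i) := fun i => by
    have h : X i = fun ω => Y i ω - Y (i + m) ω := funext (hXdef i)
    rw [h]; exact (hY i).sub (hY (i + m))
  refine ⟨X_station P m Y hY hindep hid X hXdef,
    fun n => X_mdep P m Y hY hindep X hXdef n, ?_⟩
  rintro ⟨Q, hQp, hQex, hQconv⟩
  have hXseq : Measurable (fun ω (i : ℕ) => X i ω) := measurable_pi_lambda _ fun i => hX i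
  have hμp : IsProbabilityMeasure (P.map (fun ω (i : ℕ) => X i ω)) :=
    Measure.isProbabilityMeasure_map hXseq.aemeasurable
  -- Step A : all shifts have the same law
  have hshift : ∀ n : ℕ,
      P.map (fun ω (i : ℕ) => X (n + i) ω) = P.map (fun ω (i : ℕ) => X i ω) := by
    intro n
    induction n with
    | zero => simp only [Nat.zero_add]
    | succ n ih =>
      have hS : Measurable (fun (y : ℕ → ℝ) (i : ℕ) => y (n + i)) :=
        measurable_pi_lambda _ fun i => measurable_pi_apply _
      have hX1 : Measurable (fun ω (i : ℕ) => X (i + 1) ω) :=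
        measurable_pi_lambda _ fun i => hX (i + 1)
      have e1 : (fun ω (i : ℕ) => X (n + 1 + i) ω)
          = (fun (y : ℕ → ℝ) (i : ℕ) => y (n + i)) ∘ (fun ω (i : ℕ) => X (i + 1) ω) := by
        funext ω i
        simp only [Function.comp_apply]
        congr 1
        omega
      rw [e1, ← Measure.map_map hS hX1, X_station P m Y hY hindep hid X hXdef,
        Measure.map_map hS hXseq]
      exact ih
  -- Step B : integrals of bounded continuous functions agree
  have hBCF : ∀ g : BoundedContinuousFunction (ℕ → ℝ) ℝ,
      ∫ y, g y ∂(P.map (fun ω (i : ℕ) => X i ω)) = ∫ y, g y ∂Q := by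
    intro g
    have hconst : ∀ n : ℕ, (∫ ω, g (fun i => X (n + i) ω) ∂P)
        = ∫ y, g y ∂(P.map (fun ω (i : ℕ) => X i ω)) := by
      intro n
      rw [← hshift n,
        integral_map (measurable_pi_lambda _ fun i => hX (n + i)).aemeasurable
          g.continuous.measurable.aestronglyMeasurable]
    exact tendsto_nhds_unique (tendsto_const_nhds.congr fun n => (hconst n).symm) (hQconv g)
  -- Step C : the limit law is the law of X
  have hQeq : P.map (fun ω (i : ℕ) => X i ω) = Q := by
    have hlip : LipschitzWith 1 ((↑) : ℝ≥0 → ℝ) :=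
      LipschitzWith.of_dist_le_mul fun x y => by
        rw [NNReal.dist_eq, Real.dist_eq, NNReal.coe_one, one_mul]
    refine ext_of_forall_lintegral_eq_of_IsFiniteMeasure fun f => ?_
    have hg := hBCF (BoundedContinuousFunction.comp _ hlip f)
    have hco : ∀ (μ' : Measure (ℕ → ℝ)), IsProbabilityMeasure μ' →
        ∫⁻ y, f y ∂μ'
          = ENNReal.ofReal (∫ y, (BoundedContinuousFunction.comp _ hlip f) y ∂μ') := by
      intro μ' hμ'
      rw [lintegral_coe_eq_integral f (BoundedContinuousFunction.integrable_of_nnreal (μ := μ') f)]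
      rfl
    rw [hco _ hμp, hco Q hQp, hg]
  -- the function r
  obtain ⟨r, hrdef⟩ : ∃ r : ℝ → ℝ, ∀ t, r t =
      (∫ ω, Real.cos (t * Y 0 ω) ∂P) * (∫ ω, Real.cos (t * Y 0 ω) ∂P)
        + (∫ ω, Real.sin (t * Y 0 ω) ∂P) * (∫ ω, Real.sin (t * Y 0 ω) ∂P) :=
    ⟨_, fun t => rfl⟩
  -- Step D : exchangeability gives the swap identity
  have hswap : ∀ t : ℝ,
      ∫ ω, Real.cos (t * (X 0 ω + X m ω)) ∂P
        = ∫ ω, Real.cos (t * (X 0 ω + X (2*m) ω)) ∂P := by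
    intro t
    have hσsupp : {i : ℕ | (Equiv.swap m (2*m)) i ≠ i} ⊆ {m, 2*m} := by
      intro i hi
      by_contra hnot
      simp only [Set.mem_insert_iff, Set.mem_singleton_iff] at hnot
      push_neg at hnot
      exact hi (Equiv.swap_apply_of_ne_of_ne hnot.1 hnot.2)
    have hperm := hQex (Equiv.swap m (2*m))
      (Set.Finite.subset ((Set.finite_singleton (2*m)).insert m) hσsupp)
    rw [← hQeq] at hperm
    have hpm : Measurable (fun (y : ℕ → ℝ) (i : ℕ) => y ((Equiv.swap m (2*m)) i)) :=
      measurable_pi_lambda _ fun i => measurable_pi_apply _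
    have hg1 : Measurable (fun y : ℕ → ℝ => Real.cos (t * (y 0 + y m))) :=
      by fun_prop
    have hg2 : Measurable (fun y : ℕ → ℝ => Real.cos (t * (y 0 + y (2*m)))) :=
      by fun_prop
    have e1 : ∫ ω, Real.cos (t * (X 0 ω + X m ω)) ∂P
        = ∫ y, Real.cos (t * (y 0 + y m)) ∂(P.map (fun ω (i : ℕ) => X i ω)) :=
      (integral_map hXseq.aemeasurable hg1.aestronglyMeasurable).symm
    have e2 : ∫ ω, Real.cos (t * (X 0 ω + X (2*m) ω)) ∂P
        = ∫ y, Real.cos (t * (y 0 + y (2*m))) ∂(P.map (fun ω (i : ℕ) => X i ω)) :=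
      (integral_map hXseq.aemeasurable hg2.aestronglyMeasurable).symm
    have h0 : (Equiv.swap m (2*m)) 0 = 0 :=
      Equiv.swap_apply_of_ne_of_ne (by omega) (by omega)
    have hm' : (Equiv.swap m (2*m)) m = 2*m := Equiv.swap_apply_left m (2*m)
    have e3 : ∫ y, Real.cos (t * (y 0 + y m))
        ∂((P.map (fun ω (i : ℕ) => X i ω)).map
            (fun (y : ℕ → ℝ) (i : ℕ) => y ((Equiv.swap m (2*m)) i)))
        = ∫ y, Real.cos (t * (y 0 + y (2*m))) ∂(P.map (fun ω (i : ℕ) => X i ω)) := by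
      rw [integral_map hpm.aemeasurable hg1.aestronglyMeasurable]
      refine integral_congr_ae (ae_of_all _ fun y => ?_)
      simp only [h0, hm']
    rw [e1, e2, ← e3, hperm]
  -- Step E : r t = r t * r t
  have hkey : ∀ t : ℝ, r t = r t * r t := by
    intro t
    have hL : ∫ ω, Real.cos (t * (X 0 ω + X m ω)) ∂P = r t := by
      have he : (fun ω => Real.cos (t * (X 0 ω + X m ω)))
          = fun ω => Real.cos (t * (Y 0 ω - Y (m + m) ω)) := by
        funext ω
        rw [hXdef 0 ω, hXdef m ω]
        have h0m : (0 : ℕ) + m = m := Nat.zero_add m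
        rw [h0m, sub_add_sub_cancel]
      rw [he, cos_sub_int P Y hY hindep hid t (i := 0) (j := m + m) (by omega), hrdef t]
    have hXind : IndepFun (X 0) (X (2*m)) P := by
      have h4 := (hindep.indepFun_prodMk_prodMk hY 0 m (2*m) (2*m+m)
        (by omega) (by omega) (by omega) (by omega)).comp
        (φ := fun p : ℝ × ℝ => p.1 - p.2) (ψ := fun p : ℝ × ℝ => p.1 - p.2)
        (measurable_fst.sub measurable_snd) (measurable_fst.sub measurable_snd)
      have e0 : X 0 = (fun p : ℝ × ℝ => p.1 - p.2) ∘ (fun ω => (Y 0 ω, Y m ω)) := by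
        funext ω; simp [hXdef 0 ω]
      have e2' : X (2*m)
          = (fun p : ℝ × ℝ => p.1 - p.2) ∘ (fun ω => (Y (2*m) ω, Y (2*m+m) ω)) := by
        funext ω; simp [hXdef (2*m) ω]
      rw [e0, e2']; exact h4
    have hR : ∫ ω, Real.cos (t * (X 0 ω + X (2*m) ω)) ∂P = r t * r t := by
      have hmcX : ∀ k, Measurable fun ω => Real.cos (t * X k ω) :=
        fun k => Real.measurable_cos.comp ((hX k).const_mul t)
      have hmsX : ∀ k, Measurable fun ω => Real.sin (t * X k ω) :=
        fun k => Real.measurable_sin.comp ((hX k).const_mul t)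
      have hiprod : ∀ (f g : Ω → ℝ), Measurable f → Measurable g →
          (∀ ω, |f ω| ≤ 1) → (∀ ω, |g ω| ≤ 1) → Integrable (fun ω => f ω * g ω) P :=
        fun f g hf hg hbf hbg => bdd_integrable' P (hf.mul hg) fun ω => by
          rw [Real.norm_eq_abs, abs_mul]
          calc |f ω| * |g ω| ≤ 1 * 1 :=
                mul_le_mul (hbf ω) (hbg ω) (abs_nonneg _) zero_le_one
            _ = 1 := mul_one 1
      have hexp : (fun ω => Real.cos (t * (X 0 ω + X (2*m) ω)))
          = fun ω => Real.cos (t * X 0 ω) * Real.cos (t * X (2*m) ω)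
              - Real.sin (t * X 0 ω) * Real.sin (t * X (2*m) ω) := by
        funext ω; rw [mul_add, Real.cos_add]
      rw [hexp, integral_sub
        (hiprod _ _ (hmcX 0) (hmcX (2*m)) (fun ω => Real.abs_cos_le_one _)
          (fun ω => Real.abs_cos_le_one _))
        (hiprod _ _ (hmsX 0) (hmsX (2*m)) (fun ω => Real.abs_sin_le_one _)
          (fun ω => Real.abs_sin_le_one _))]
      have hicX : ∀ k, Integrable (fun ω => Real.cos (t * X k ω)) P := fun k =>
        bdd_integrable' P (hmcX k) fun ω => by
          rw [Real.norm_eq_abs]; exact Real.abs_cos_le_one _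
      have hisX : ∀ k, Integrable (fun ω => Real.sin (t * X k ω)) P := fun k =>
        bdd_integrable' P (hmsX k) fun ω => by
          rw [Real.norm_eq_abs]; exact Real.abs_sin_le_one _
      have hic1 : IndepFun (fun ω => Real.cos (t * X 0 ω))
          (fun ω => Real.cos (t * X (2*m) ω)) P :=
        hXind.comp (Real.measurable_cos.comp (measurable_id.const_mul t))
          (Real.measurable_cos.comp (measurable_id.const_mul t))
      have his1 : IndepFun (fun ω => Real.sin (t * X 0 ω))
          (fun ω => Real.sin (t * X (2*m) ω)) P :=
        hXind.comp (Real.measurable_sin.comp (measurable_id.const_mul t))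
          (Real.measurable_sin.comp (measurable_id.const_mul t))
      have hm1 : ∫ ω, Real.cos (t * X 0 ω) * Real.cos (t * X (2*m) ω) ∂P
          = (∫ ω, Real.cos (t * X 0 ω) ∂P) * ∫ ω, Real.cos (t * X (2*m) ω) ∂P :=
        hic1.integral_fun_mul_eq_mul_integral (hicX 0).aestronglyMeasurable (hicX (2*m)).aestronglyMeasurable
      have hm2 : ∫ ω, Real.sin (t * X 0 ω) * Real.sin (t * X (2*m) ω) ∂P
          = (∫ ω, Real.sin (t * X 0 ω) ∂P) * ∫ ω, Real.sin (t * X (2*m) ω) ∂P :=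
        his1.integral_fun_mul_eq_mul_integral (hisX 0).aestronglyMeasurable (hisX (2*m)).aestronglyMeasurable
      have hv1 : ∫ ω, Real.cos (t * X 0 ω) ∂P = r t := by
        have e : (fun ω => Real.cos (t * X 0 ω))
            = fun ω => Real.cos (t * (Y 0 ω - Y (0 + m) ω)) := by
          funext ω; rw [hXdef 0 ω]
        rw [e, cos_sub_int P Y hY hindep hid t (i := 0) (j := 0 + m) (by omega), hrdef t]
      have hv2 : ∫ ω, Real.cos (t * X (2*m) ω) ∂P = r t := by
        have e : (fun ω => Real.cos (t * X (2*m) ω))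
            = fun ω => Real.cos (t * (Y (2*m) ω - Y (2*m + m) ω)) := by
          funext ω; rw [hXdef (2*m) ω]
        rw [e, cos_sub_int P Y hY hindep hid t (i := 2*m) (j := 2*m + m) (by omega), hrdef t]
      have hv3 : ∫ ω, Real.sin (t * X 0 ω) ∂P = 0 := by
        have e : (fun ω => Real.sin (t * X 0 ω))
            = fun ω => Real.sin (t * (Y 0 ω - Y (0 + m) ω)) := by
          funext ω; rw [hXdef 0 ω]
        rw [e, sin_sub_int P Y hY hindep hid t (i := 0) (j := 0 + m) (by omega)]
      have hv4 : ∫ ω, Real.sin (t * X (2*m) ω) ∂P = 0 := by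
        have e : (fun ω => Real.sin (t * X (2*m) ω))
            = fun ω => Real.sin (t * (Y (2*m) ω - Y (2*m + m) ω)) := by
          funext ω; rw [hXdef (2*m) ω]
        rw [e, sin_sub_int P Y hY hindep hid t (i := 2*m) (j := 2*m + m) (by omega)]
      rw [hm1, hm2, hv1, hv2, hv3, hv4]
      ring
    exact (hL.symm.trans (hswap t)).trans hR
  -- Step F : r ≡ 1 by continuity and connectedness
  have hc_cont : Continuous fun t : ℝ => ∫ ω, Real.cos (t * Y 0 ω) ∂P := by
    apply continuous_of_dominated (bound := fun _ => (1 : ℝ))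
    · exact fun t => (Real.measurable_cos.comp ((hY 0).const_mul t)).aestronglyMeasurable
    · exact fun t => ae_of_all _ fun ω => by
        rw [Real.norm_eq_abs]; exact Real.abs_cos_le_one _
    · exact integrable_const 1
    · exact ae_of_all _ fun ω => by fun_prop
  have hs_cont : Continuous fun t : ℝ => ∫ ω, Real.sin (t * Y 0 ω) ∂P := by
    apply continuous_of_dominated (bound := fun _ => (1 : ℝ))
    · exact fun t => (Real.measurable_sin.comp ((hY 0).const_mul t)).aestronglyMeasurable
    · exact fun t => ae_of_all _ fun ω => by
        rw [Real.norm_eq_abs]; exact Real.abs_sin_le_one _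
    · exact integrable_const 1
    · exact ae_of_all _ fun ω => by fun_prop
  have hr_cont : Continuous r := by
    have : r = fun t => (∫ ω, Real.cos (t * Y 0 ω) ∂P) * (∫ ω, Real.cos (t * Y 0 ω) ∂P)
        + (∫ ω, Real.sin (t * Y 0 ω) ∂P) * (∫ ω, Real.sin (t * Y 0 ω) ∂P) := funext hrdef
    rw [this]
    exact (hc_cont.mul hc_cont).add (hs_cont.mul hs_cont)
  have hr0 : r 0 = 1 := by
    rw [hrdef 0]
    have h1 : (fun ω => Real.cos ((0:ℝ) * Y 0 ω)) = fun _ => (1:ℝ) := by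
      funext ω; rw [zero_mul, Real.cos_zero]
    have h2 : (fun ω => Real.sin ((0:ℝ) * Y 0 ω)) = fun _ => (0:ℝ) := by
      funext ω; rw [zero_mul, Real.sin_zero]
    rw [h1, h2]
    simp
  have hone : ∀ t : ℝ, r t = 1 := by
    have h01 : ∀ t, r t = 0 ∨ r t = 1 := by
      intro t
      have h2 : r t * (r t - 1) = 0 := by linear_combination -hkey t
      rcases mul_eq_zero.mp h2 with h | h
      · exact Or.inl h
      · right; linarith
    have hcl : IsClosed {t : ℝ | r t = 1} := isClosed_eq hr_cont continuous_const
    have hop : IsOpen {t : ℝ | r t = 1} := by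
      have hset : {t : ℝ | r t = 1} = r ⁻¹' Set.Ioi (1/2 : ℝ) := by
        ext t
        simp only [Set.mem_setOf_eq, Set.mem_preimage, Set.mem_Ioi]
        constructor
        · intro h; rw [h]; norm_num
        · intro h; rcases h01 t with h0 | h1
          · rw [h0] at h; norm_num at h
          · exact h1
      rw [hset]; exact isOpen_Ioi.preimage hr_cont
    have huniv := IsClopen.eq_univ ⟨hcl, hop⟩ ⟨0, hr0⟩
    intro t
    have ht : t ∈ {t : ℝ | r t = 1} := huniv ▸ Set.mem_univ t
    exact ht
  -- Step G : cos (t D) = 1 a.s., hence Y 0 = Y m a.s.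
  have hae : ∀ t : ℝ, ∀ᵐ ω ∂P, Real.cos (t * (Y 0 ω - Y m ω)) = 1 := by
    intro t
    have hint : Integrable (fun ω => Real.cos (t * (Y 0 ω - Y m ω))) P :=
      bdd_integrable' P (Real.measurable_cos.comp (((hY 0).sub (hY m)).const_mul t))
        fun ω => by rw [Real.norm_eq_abs]; exact Real.abs_cos_le_one _
    have h1 : ∫ ω, Real.cos (t * (Y 0 ω - Y m ω)) ∂P = 1 := by
      rw [cos_sub_int P Y hY hindep hid t (i := 0) (j := m) (by omega), ← hrdef t]
      exact hone t
    have hint2 : Integrable (fun ω => 1 - Real.cos (t * (Y 0 ω - Y m ω))) P :=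
      (integrable_const 1).sub hint
    have hz : ∫ ω, (1 - Real.cos (t * (Y 0 ω - Y m ω))) ∂P = 0 := by
      rw [integral_sub (integrable_const 1) hint, h1]
      simp
    have hnn : 0 ≤ᵐ[P] fun ω => 1 - Real.cos (t * (Y 0 ω - Y m ω)) :=
      ae_of_all _ fun ω => by
        simp only [Pi.zero_apply]
        linarith [Real.cos_le_one (t * (Y 0 ω - Y m ω))]
    have hz2 := (integral_eq_zero_iff_of_nonneg_ae hnn hint2).mp hz
    filter_upwards [hz2] with ω hω
    have h' : (1:ℝ) - Real.cos (t * (Y 0 ω - Y m ω)) = 0 := by simpa using hω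
    linarith
  have hYeq : ∀ᵐ ω ∂P, Y 0 ω = Y m ω := by
    filter_upwards [hae 1, hae (Real.sqrt 2)] with ω h1 h2
    rw [one_mul] at h1
    obtain ⟨k, hk⟩ := (Real.cos_eq_one_iff _).mp h1
    obtain ⟨l, hl⟩ := (Real.cos_eq_one_iff _).mp h2
    have h2pi : (2:ℝ) * Real.pi ≠ 0 := by positivity
    have hD : Y 0 ω - Y m ω = 0 := by
      by_contra hD0
      have hk0 : (k:ℝ) ≠ 0 := fun h => hD0 (by rw [← hk, h, zero_mul])
      have h' : (l:ℝ) * (2*Real.pi) = Real.sqrt 2 * (k:ℝ) * (2*Real.pi) := by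
        rw [mul_assoc (Real.sqrt 2), hk]; exact hl
      have hle : (l:ℝ) = Real.sqrt 2 * k := mul_right_cancel₀ h2pi h'
      have hsq : Real.sqrt 2 = (l:ℝ) / (k:ℝ) := by
        rw [hle]; field_simp
      exact irrational_sqrt_two ⟨(l:ℚ)/(k:ℚ), by push_cast; rw [hsq]⟩
    linarith
  -- Step H : Y 0 is a.s. constant, contradiction
  have hIY : IndepFun (Y 0) (Y m) P := hindep.indepFun (by omega)
  have h01' : ∀ t : ℝ, P (Y 0 ⁻¹' Set.Iic t) = 0 ∨ P (Y 0 ⁻¹' Set.Iic t) = 1 := by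
    intro t
    have hmeq : P (Y m ⁻¹' Set.Iic t) = P (Y 0 ⁻¹' Set.Iic t) := by
      rw [← Measure.map_apply (hY m) measurableSet_Iic,
        ← Measure.map_apply (hY 0) measurableSet_Iic, hid m]
    have hind2 := (indepFun_iff_measure_inter_preimage_eq_mul.mp hIY)
      (Set.Iic t) (Set.Iic t) measurableSet_Iic measurableSet_Iic
    have hcong : P (Y 0 ⁻¹' Set.Iic t ∩ Y m ⁻¹' Set.Iic t) = P (Y 0 ⁻¹' Set.Iic t) := by
      refine measure_congr (Filter.eventuallyEq_set.mpr ?_)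
      filter_upwards [hYeq] with ω hω
      simp only [Set.mem_inter_iff, Set.mem_preimage, Set.mem_Iic, hω, and_self]
    rcases eq_or_ne (P (Y 0 ⁻¹' Set.Iic t)) 0 with h0 | h0
    · exact Or.inl h0
    · right
      have haa : P (Y 0 ⁻¹' Set.Iic t) * P (Y 0 ⁻¹' Set.Iic t) = P (Y 0 ⁻¹' Set.Iic t) := by
        calc P (Y 0 ⁻¹' Set.Iic t) * P (Y 0 ⁻¹' Set.Iic t)
            = P (Y 0 ⁻¹' Set.Iic t) * P (Y m ⁻¹' Set.Iic t) := by rw [hmeq]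
          _ = P (Y 0 ⁻¹' Set.Iic t ∩ Y m ⁻¹' Set.Iic t) := hind2.symm
          _ = P (Y 0 ⁻¹' Set.Iic t) := hcong
      exact (ENNReal.mul_eq_left h0 (measure_ne_top P _)).mp haa
  have hex1 : ∃ n : ℕ, P (Y 0 ⁻¹' Set.Iic (n : ℝ)) = 1 := by
    by_contra hcon
    push_neg at hcon
    have h0 : ∀ n : ℕ, P (Y 0 ⁻¹' Set.Iic (n:ℝ)) = 0 :=
      fun n => (h01' n).resolve_right (hcon n)
    have hU : (⋃ n : ℕ, Y 0 ⁻¹' Set.Iic (n:ℝ)) = Set.univ := by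
      ext ω
      simp only [Set.mem_iUnion, Set.mem_preimage, Set.mem_Iic, Set.mem_univ, iff_true]
      exact exists_nat_ge (Y 0 ω)
    have hnull := measure_iUnion_null h0
    rw [hU, measure_univ] at hnull
    exact one_ne_zero hnull
  have hex0 : ∃ n : ℕ, P (Y 0 ⁻¹' Set.Iic (-(n : ℝ))) = 0 := by
    by_contra hcon
    push_neg at hcon
    have h1 : ∀ n : ℕ, P (Y 0 ⁻¹' Set.Iic (-(n:ℝ))) = 1 :=
      fun n => (h01' _).resolve_left (hcon n)
    have hone' : ∀ n : ℕ, ∀ᵐ ω ∂P, Y 0 ω ≤ -(n:ℝ) := by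
      intro n
      have hc : P ((Y 0 ⁻¹' Set.Iic (-(n:ℝ)))ᶜ) = 0 :=
        (prob_compl_eq_zero_iff ((hY 0) measurableSet_Iic)).mpr (h1 n)
      rw [ae_iff]
      have hseteq : {a | ¬Y 0 a ≤ -(n:ℝ)} = (Y 0 ⁻¹' Set.Iic (-(n:ℝ)))ᶜ := by
        ext ω; simp
      rw [hseteq]
      exact hc
    have hall := ae_all_iff.mpr hone'
    have hfalse : ∀ᵐ _ω ∂P, False := by
      filter_upwards [hall] with ω hω
      obtain ⟨n, hn⟩ := exists_nat_gt (-(Y 0 ω))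
      have := hω n
      linarith
    rw [ae_iff] at hfalse
    have huniv : P Set.univ = 0 := by simp only [not_false_eq_true, Set.setOf_true] at hfalse; exact hfalse
    rw [measure_univ] at huniv
    exact one_ne_zero huniv
  obtain ⟨N1, hN1⟩ := hex1
  obtain ⟨N0, hN0⟩ := hex0
  have hSne : Set.Nonempty {t : ℝ | P (Y 0 ⁻¹' Set.Iic t) = 1} := ⟨(N1:ℝ), hN1⟩
  have hmono : ∀ {t u : ℝ}, t ≤ u → P (Y 0 ⁻¹' Set.Iic t) ≤ P (Y 0 ⁻¹' Set.Iic u) :=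
    fun h => measure_mono (Set.preimage_mono (Set.Iic_subset_Iic.mpr h))
  have hSbdd : BddBelow {t : ℝ | P (Y 0 ⁻¹' Set.Iic t) = 1} := by
    refine ⟨-(N0:ℝ), fun t ht => ?_⟩
    by_contra hlt
    push_neg at hlt
    have hle := hmono (le_of_lt hlt)
    have ht' : P (Y 0 ⁻¹' Set.Iic t) = 1 := ht
    rw [ht', hN0] at hle
    simp at hle
  obtain ⟨cst, hcstdef⟩ : ∃ c : ℝ, c = sInf {t : ℝ | P (Y 0 ⁻¹' Set.Iic t) = 1} := ⟨_, rfl⟩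
  have hlt0 : P (Y 0 ⁻¹' Set.Iio cst) = 0 := by
    have hsub : Y 0 ⁻¹' Set.Iio cst = ⋃ n : ℕ, Y 0 ⁻¹' Set.Iic (cst - 1/((n:ℝ)+1)) := by
      ext ω
      simp only [Set.mem_preimage, Set.mem_Iio, Set.mem_iUnion, Set.mem_Iic]
      constructor
      · intro h
        obtain ⟨n, hn⟩ := exists_nat_one_div_lt (sub_pos.mpr h)
        exact ⟨n, by linarith⟩
      · rintro ⟨n, hn⟩
        have hpos : (0:ℝ) < 1/((n:ℝ)+1) := by positivity
        linarith
    rw [hsub]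
    refine measure_iUnion_null fun n => ?_
    rcases h01' (cst - 1/((n:ℝ)+1)) with h | h
    · exact h
    · exfalso
      have hle := csInf_le hSbdd h
      rw [← hcstdef] at hle
      have hpos : (0:ℝ) < 1/((n:ℝ)+1) := by positivity
      linarith
  have hgt0 : P (Y 0 ⁻¹' Set.Ioi cst) = 0 := by
    have hsub : Y 0 ⁻¹' Set.Ioi cst ⊆ ⋃ n : ℕ, (Y 0 ⁻¹' Set.Iic (cst + 1/((n:ℝ)+1)))ᶜ := by
      intro ω hω
      simp only [Set.mem_preimage, Set.mem_Ioi] at hω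
      obtain ⟨n, hn⟩ := exists_nat_one_div_lt (sub_pos.mpr hω)
      simp only [Set.mem_iUnion, Set.mem_compl_iff, Set.mem_preimage, Set.mem_Iic, not_le]
      exact ⟨n, by linarith⟩
    refine measure_mono_null hsub (measure_iUnion_null fun n => ?_)
    have hpos : (0:ℝ) < 1/((n:ℝ)+1) := by positivity
    have hm1 : P (Y 0 ⁻¹' Set.Iic (cst + 1/((n:ℝ)+1))) = 1 := by
      obtain ⟨u, huS, hult⟩ := (csInf_lt_iff hSbdd hSne).mp
        (show sInf {t : ℝ | P (Y 0 ⁻¹' Set.Iic t) = 1} < cst + 1/((n:ℝ)+1) by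
          rw [← hcstdef]; linarith)
      have h2 := hmono (le_of_lt hult)
      have hu' : P (Y 0 ⁻¹' Set.Iic u) = 1 := huS
      rw [hu'] at h2
      exact le_antisymm prob_le_one h2
    exact (prob_compl_eq_zero_iff ((hY 0) measurableSet_Iic)).mpr hm1
  refine hnd ⟨cst, ?_⟩
  rw [ae_iff]
  refine measure_mono_null (fun ω hω => ?_) (measure_union_null hlt0 hgt0)
  simp only [Set.mem_setOf_eq] at hω
  rcases lt_or_gt_of_ne hω with h | h
  · exact Set.mem_union_left _ h
  · exact Set.mem_union_right _ h
end
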